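/- Let h : [1/2, 1) → ℝ be locally Lipschitz and suppose that for almost every t ∈ (1/2, 1) its derivative satisfies h'(t) ≥ −4π(t − 1/2) − (3(2t−1)/(t(1−t)))·h(t) + 6·∫_{1/2}^{t} h(s)/(s(1−s)) ds. Set a₀ = 1/4 − h(1/2)/π. Then for every t ∈ (1/2, 1): (1/2)t² − (1/3)t³ − 1/12 − (1/(4π))·∫_{1/2}^{t} h(s)/(s(1−s)) ds ≤ (2a₀/3)(3t² − 3t + 1) − (4a₀/3)(1−t)³. -/

import Mathlib

open MeasureTheory Set Filter intervalIntegral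

set_option maxHeartbeats 1000000

lemma lip_deriv_bound {f : ℝ → ℝ} {L : NNReal} (hf : LipschitzWith L f) (x : ℝ) :
    |deriv f x| ≤ L := by
  by_cases hd : DifferentiableAt ℝ f x
  · have h1 : Tendsto (slope f x) (nhdsWithin x {x}ᶜ) (nhds (deriv f x)) :=
      hasDerivAt_iff_tendsto_slope.1 hd.hasDerivAt
    have h2 : Tendsto (fun y => |slope f x y|) (nhdsWithin x {x}ᶜ) (nhds |deriv f x|) :=
      h1.abs
    refine le_of_tendsto h2 ?_
    filter_upwards [self_mem_nhdsWithin] with y hy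
    have hxy : y ≠ x := hy
    rw [slope_def_field, div_eq_mul_inv, abs_mul, abs_inv]
    have := hf.dist_le_mul y x
    rw [Real.dist_eq, Real.dist_eq] at this
    have hyx : |y - x| > 0 := abs_pos.2 (sub_ne_zero.2 hxy)
    rw [mul_inv_le_iff₀ hyx] -- maybe name differs
    simpa [mul_comm] using this
  · simp [deriv_zero_of_not_differentiableAt hd, NNReal.coe_nonneg]

lemma ftc_lipschitz {f : ℝ → ℝ} {L : NNReal} (hf : LipschitzWith L f) {a b : ℝ} (hab : a ≤ b) :
    ∫ x in a..b, deriv f x = f b - f a := by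
  have hc : Continuous f := hf.continuous
  have hδ0 : ∀ n : ℕ, (0:ℝ) < 1/((n:ℝ)+1) := fun n => by positivity
  have hδz : Tendsto (fun n : ℕ => 1/((n:ℝ)+1)) atTop (nhds 0) :=
    tendsto_one_div_add_atTop_nhds_zero_nat
  set g : ℕ → ℝ → ℝ := fun n x => ((n:ℝ) + 1) * (f (x + 1 / ((n:ℝ) + 1)) - f x) with hg
  have hcont : ∀ n : ℕ, Continuous (g n) := by
    intro n; rw [hg]; fun_prop
  -- integral of g n
  have key1 : ∀ n : ℕ, ∫ x in a..b, g n x =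
      ((n:ℝ) + 1) * ((∫ x in b..(b + 1/((n:ℝ)+1)), f x) - ∫ x in a..(a + 1/((n:ℝ)+1)), f x) := by
    intro n
    have hint : ∀ u v : ℝ, IntervalIntegrable f volume u v := fun u v =>
      hc.intervalIntegrable u v
    have hint2 : IntervalIntegrable (fun x => f (x + 1/((n:ℝ)+1))) volume a b :=
      ((by fun_prop : Continuous fun x : ℝ => f (x + 1/((n:ℝ)+1)))).intervalIntegrable a b
    have e1 : ∫ x in a..b, g n x
        = ((n:ℝ)+1) * ((∫ x in a..b, f (x + 1/((n:ℝ)+1))) - ∫ x in a..b, f x) := by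
      simp only [hg]
      rw [intervalIntegral.integral_const_mul, intervalIntegral.integral_sub hint2 (hint a b)]
    rw [e1, intervalIntegral.integral_comp_add_right f (1/((n:ℝ)+1))]
    have chasles1 : (∫ x in (a + 1/((n:ℝ)+1))..(b + 1/((n:ℝ)+1)), f x)
        = (∫ x in (a + 1/((n:ℝ)+1))..b, f x) + ∫ x in b..(b + 1/((n:ℝ)+1)), f x :=
      (intervalIntegral.integral_add_adjacent_intervals (hint _ _) (hint _ _)).symm
    have chasles2 : (∫ x in a..b, f x)
        = (∫ x in a..(a + 1/((n:ℝ)+1)), f x) + ∫ x in (a + 1/((n:ℝ)+1))..b, f x :=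
      (intervalIntegral.integral_add_adjacent_intervals (hint _ _) (hint _ _)).symm
    rw [chasles1, chasles2]; ring
  -- endpoint limits
  have ptlim : ∀ c : ℝ, Tendsto (fun n : ℕ => ((n:ℝ) + 1) * ∫ x in c..(c + 1/((n:ℝ)+1)), f x)
      atTop (nhds (f c)) := by
    intro c
    have hd : ∀ n : ℕ, |((n:ℝ) + 1) * (∫ x in c..(c + 1/((n:ℝ)+1)), f x) - f c|
        ≤ (L:ℝ) * (1/((n:ℝ)+1)) := by
      intro n
      have hpos : (0:ℝ) < (n:ℝ) + 1 := by positivity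
      have e2 : ((n:ℝ) + 1) * (∫ x in c..(c + 1/((n:ℝ)+1)), f x) - f c
          = ((n:ℝ)+1) * ∫ x in c..(c + 1/((n:ℝ)+1)), (f x - f c) := by
        rw [intervalIntegral.integral_sub (hc.intervalIntegrable _ _) intervalIntegrable_const,
          intervalIntegral.integral_const, smul_eq_mul]
        have hc2 : c + 1/((n:ℝ)+1) - c = 1/((n:ℝ)+1) := by ring
        rw [hc2]
        field_simp
      rw [e2, abs_mul]
      have hbd : ‖∫ x in c..(c + 1/((n:ℝ)+1)), (f x - f c)‖
          ≤ ((L:ℝ) * (1/((n:ℝ)+1))) * |c + 1/((n:ℝ)+1) - c| := by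
        apply intervalIntegral.norm_integral_le_of_norm_le_const
        intro x hx
        rw [uIoc_of_le (by linarith [hδ0 n])] at hx
        have h1 : |f x - f c| ≤ (L:ℝ) * |x - c| := by
          have := hf.dist_le_mul x c
          rwa [Real.dist_eq, Real.dist_eq] at this
        have h2 : |x - c| ≤ 1/((n:ℝ)+1) := by
          rw [abs_of_pos (by linarith [hx.1])]
          linarith [hx.2]
        calc ‖f x - f c‖ = |f x - f c| := rfl
          _ ≤ (L:ℝ) * |x - c| := h1
          _ ≤ (L:ℝ) * (1/((n:ℝ)+1)) := mul_le_mul_of_nonneg_left h2 (NNReal.coe_nonneg L)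
      have e3 : |c + 1/((n:ℝ)+1) - c| = 1/((n:ℝ)+1) := by
        rw [add_sub_cancel_left, abs_of_pos (hδ0 n)]
      rw [e3] at hbd
      calc |((n:ℝ)+1)| * |∫ x in c..(c + 1/((n:ℝ)+1)), (f x - f c)|
          ≤ |((n:ℝ)+1)| * (((L:ℝ) * (1/((n:ℝ)+1))) * (1/((n:ℝ)+1))) :=
            mul_le_mul_of_nonneg_left hbd (abs_nonneg _)
        _ = (L:ℝ) * (1/((n:ℝ)+1)) := by
            rw [abs_of_pos hpos]; field_simp
    have hz : Tendsto (fun n : ℕ => (L:ℝ) * (1/((n:ℝ)+1))) atTop (nhds 0) := by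
      simpa using hδz.const_mul (L:ℝ)
    have : Tendsto (fun n : ℕ => ((n:ℝ) + 1) * (∫ x in c..(c + 1/((n:ℝ)+1)), f x) - f c)
        atTop (nhds 0) := squeeze_zero_norm hd hz
    simpa using this.add_const (f c)
  have lim1 : Tendsto (fun n => ∫ x in a..b, g n x) atTop (nhds (f b - f a)) := by
    simp only [key1, mul_sub]
    exact (ptlim b).sub (ptlim a)
  -- dominated convergence
  have lim2 : Tendsto (fun n => ∫ x in a..b, g n x) atTop (nhds (∫ x in a..b, deriv f x)) := by
    simp only [intervalIntegral.integral_of_le hab]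
    apply MeasureTheory.tendsto_integral_of_dominated_convergence (fun _ => (L:ℝ))
    · exact fun n => (hcont n).aestronglyMeasurable
    · exact integrable_const _
    · intro n
      filter_upwards with x
      have hpos : (0:ℝ) < (n:ℝ) + 1 := by positivity
      have h1 : |f (x + 1/((n:ℝ)+1)) - f x| ≤ (L:ℝ) * (1/((n:ℝ)+1)) := by
        have := hf.dist_le_mul (x + 1/((n:ℝ)+1)) x
        rw [Real.dist_eq, Real.dist_eq, add_sub_cancel_left, abs_of_pos (hδ0 n)] at this
        exact this
      have h2 : |g n x| ≤ ((n:ℝ)+1) * ((L:ℝ) * (1/((n:ℝ)+1))) := by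
        rw [hg, abs_mul, abs_of_pos hpos]
        exact mul_le_mul_of_nonneg_left h1 (le_of_lt hpos)
      calc ‖g n x‖ = |g n x| := rfl
        _ ≤ ((n:ℝ)+1) * ((L:ℝ) * (1/((n:ℝ)+1))) := h2
        _ = (L:ℝ) := by field_simp
    · have hae := hf.ae_differentiableAt (μ := volume)
      have hrestrict := MeasureTheory.ae_restrict_of_ae (s := Ioc a b) hae
      filter_upwards [hrestrict] with x hx
      have hslope : Tendsto (slope f x) (nhdsWithin x {x}ᶜ) (nhds (deriv f x)) :=
        hasDerivAt_iff_tendsto_slope.1 hx.hasDerivAt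
      have hseq : Tendsto (fun n : ℕ => x + 1/((n:ℝ)+1)) atTop (nhdsWithin x {x}ᶜ) := by
        apply tendsto_nhdsWithin_of_tendsto_nhds_of_eventually_within
        · simpa using tendsto_const_nhds.add hδz
        · filter_upwards with n
          simp only [mem_compl_iff, mem_singleton_iff]
          intro hcontra
          nlinarith [hδ0 n, hcontra]
      have hcomp := hslope.comp hseq
      apply hcomp.congr
      intro n
      have hne : (1:ℝ)/((n:ℝ)+1) ≠ 0 := ne_of_gt (hδ0 n)
      simp only [Function.comp_apply, slope_def_field, hg, add_sub_cancel_left]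
      rw [div_eq_mul_inv, one_div, inv_inv]
      ring
  exact tendsto_nhds_unique lim2 lim1

lemma integral_le_of_lip {f g : ℝ → ℝ} {L : NNReal} {a b : ℝ} (hab : a ≤ b)
    (hf : LipschitzOnWith L f (Icc a b)) (hg : ContinuousOn g (Icc a b))
    (hle : ∀ᵐ t ∂(volume : Measure ℝ), t ∈ Ioo a b → g t ≤ deriv f t) :
    (∫ x in a..b, g x) ≤ f b - f a := by
  obtain ⟨F, hF, hEq⟩ := hf.extend_real
  have hfa : f a = F a := hEq (left_mem_Icc.2 hab)
  have hfb : f b = F b := hEq (right_mem_Icc.2 hab)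
  rw [hfa, hfb, ← ftc_lipschitz hF hab]
  have hdF : Measurable (deriv F) := measurable_deriv F
  have hintF : IntervalIntegrable (deriv F) volume a b := by
    rw [intervalIntegrable_iff]
    refine Integrable.mono' (g := fun _ => (L:ℝ)) ?_ hdF.aestronglyMeasurable ?_
    · exact (integrableOn_const measure_Ioc_lt_top.ne)
    · filter_upwards with x
      simpa using lip_deriv_bound hF x
  have hintg : IntervalIntegrable g volume a b := by
    have hg' : ContinuousOn g (uIcc a b) := by rwa [uIcc_of_le hab]
    exact hg'.intervalIntegrable
  apply intervalIntegral.integral_mono_ae_restrict hab hintg hintF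
  have h1 : ∀ᵐ x ∂(volume : Measure ℝ), x ∉ ({a, b} : Set ℝ) := by
    have : volume ({a, b} : Set ℝ) = 0 := by
      rw [Set.insert_eq]
      refine measure_union_null ?_ ?_ <;> simp [Real.volume_singleton]
    exact measure_eq_zero_iff_ae_notMem.1 this
  have h2 : ∀ᵐ x ∂(volume.restrict (Icc a b)), x ∈ Icc a b := ae_restrict_mem measurableSet_Icc
  filter_upwards [h2, ae_restrict_of_ae h1, ae_restrict_of_ae hle] with x hx hx1 hx2
  have hxIoo : x ∈ Ioo a b := by
    simp only [mem_insert_iff, mem_singleton_iff, not_or] at hx1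
    exact ⟨lt_of_le_of_ne hx.1 (Ne.symm hx1.1), lt_of_le_of_ne hx.2 hx1.2⟩
  have : deriv f x = deriv F x := by
    apply Filter.EventuallyEq.deriv_eq
    filter_upwards [Ioo_mem_nhds hxIoo.1 hxIoo.2] with y hy
    exact hEq (Ioo_subset_Icc_self hy)
  rw [← this]
  exact hx2 hxIoo

lemma lipschitzOnWith_mul {f g : ℝ → ℝ} {s : Set ℝ} {Kf Kg : NNReal} {Bf Bg : ℝ}
    (hf : LipschitzOnWith Kf f s) (hg : LipschitzOnWith Kg g s)
    (bf : ∀ x ∈ s, |f x| ≤ Bf) (bg : ∀ x ∈ s, |g x| ≤ Bg) :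
    ∃ K : NNReal, LipschitzOnWith K (fun x => f x * g x) s := by
  refine ⟨(Kf * Real.toNNReal Bg + Real.toNNReal Bf * Kg), ?_⟩
  apply LipschitzOnWith.of_dist_le_mul
  intro x hx y hy
  rw [Real.dist_eq, Real.dist_eq]
  have key : f x * g x - f y * g y = (f x - f y) * g x + f y * (g x - g y) := by ring
  rw [key]
  have h1 : |(f x - f y) * g x| ≤ (Kf * |x - y|) * Bg := by
    rw [abs_mul]
    apply mul_le_mul _ (bg x hx) (abs_nonneg _) (by positivity)
    have := hf.dist_le_mul x hx y hy
    rwa [Real.dist_eq, Real.dist_eq] at this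
  have h2 : |f y * (g x - g y)| ≤ Bf * (Kg * |x - y|) := by
    rw [abs_mul]
    apply mul_le_mul (bf y hy) _ (abs_nonneg _) ((abs_nonneg _).trans (bf y hy))
    have := hg.dist_le_mul x hx y hy
    rwa [Real.dist_eq, Real.dist_eq] at this
  have hBf : 0 ≤ Bf := (abs_nonneg _).trans (bf x hx)
  have hBg : 0 ≤ Bg := (abs_nonneg _).trans (bg x hx)
  calc |(f x - f y) * g x + f y * (g x - g y)| ≤ |(f x - f y) * g x| + |f y * (g x - g y)| :=
        abs_add_le _ _
    _ ≤ (Kf * |x - y|) * Bg + Bf * (Kg * |x - y|) := add_le_add h1 h2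
    _ ≤ (Kf * Real.toNNReal Bg + Real.toNNReal Bf * Kg) * |x - y| := by
        push_cast
        rw [Real.coe_toNNReal _ hBg, Real.coe_toNNReal _ hBf]
        ring_nf
        exact le_refl _

lemma gronwall_pos {a b : ℝ} (hab : a ≤ b) {w m c₁ c₂ : ℝ → ℝ} {C M : ℝ}
    (hC : 0 ≤ C) (hM : 0 ≤ M)
    (hc₁ : ∀ s ∈ Icc a b, 0 ≤ c₁ s ∧ c₁ s ≤ C) (hc₂ : ∀ s ∈ Icc a b, 0 ≤ c₂ s ∧ c₂ s ≤ C)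
    (hcw : ContinuousOn (fun s => c₁ s * m s) (Icc a b))
    (hcm : ContinuousOn (fun s => c₂ s * w s) (Icc a b))
    (hw : ∀ t ∈ Icc a b, w t = ∫ s in a..t, c₁ s * m s)
    (hm : ∀ t ∈ Icc a b, (∫ s in a..t, c₂ s * w s) ≤ m t)
    (hbw : ∀ s ∈ Icc a b, |w s| ≤ M) (hbm : ∀ s ∈ Icc a b, |m s| ≤ M) :
    ∀ t ∈ Icc a b, 0 ≤ w t := by
  have key : ∀ n : ℕ, ∀ t ∈ Icc a b,
      -(M * ((C * (t - a))^n / n.factorial)) ≤ w t ∧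
      -(M * ((C * (t - a))^n / n.factorial)) ≤ m t := by
    intro n
    induction n with
    | zero =>
      intro t ht
      simp only [pow_zero, Nat.factorial_zero, Nat.cast_one, div_one, mul_one]
      exact ⟨by linarith [abs_le.1 (hbw t ht)], by linarith [abs_le.1 (hbm t ht)]⟩
    | succ n ih =>
      intro t ht
      have hta : a ≤ t := ht.1
      have hIcc : Icc a t ⊆ Icc a b := Icc_subset_Icc le_rfl ht.2
      have step : ∀ (c f : ℝ → ℝ), (∀ s ∈ Icc a b, 0 ≤ c s ∧ c s ≤ C) →
          ContinuousOn (fun s => c s * f s) (Icc a b) →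
          (∀ s ∈ Icc a b, -(M * ((C * (s - a))^n / n.factorial)) ≤ f s) →
          -(M * ((C * (t - a))^(n+1) / (n+1).factorial)) ≤ ∫ s in a..t, c s * f s := by
        intro c f hc hcf hlow
        have h1 : (∫ s in a..t, -(M * C^(n+1) * (s - a)^n / n.factorial)) ≤
            ∫ s in a..t, c s * f s := by
          apply intervalIntegral.integral_mono_on hta
          · apply Continuous.intervalIntegrable; fun_prop
          · apply ContinuousOn.intervalIntegrable
            rw [uIcc_of_le hta]; exact hcf.mono hIcc
          · intro s hs
            have hs' : s ∈ Icc a b := hIcc hs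
            set X : ℝ := M * ((C * (s - a))^n / n.factorial) with hXdef
            have hX : 0 ≤ X := by
              apply mul_nonneg hM
              apply div_nonneg _ (Nat.cast_nonneg _)
              exact pow_nonneg (mul_nonneg hC (by linarith [hs.1])) n
            have hfs := hlow s hs'
            have hcs := hc s hs'
            calc -(M * C^(n+1) * (s - a)^n / ↑n.factorial) = -(C * X) := by
                  rw [hXdef, mul_pow, pow_succ]; ring
              _ ≤ -(c s * X) := neg_le_neg (mul_le_mul_of_nonneg_right hcs.2 hX)
              _ = c s * (-X) := by ring
              _ ≤ c s * f s := mul_le_mul_of_nonneg_left hfs hcs.1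
        refine le_trans (le_of_eq ?_) h1
        have e1 : (fun s : ℝ => -(M * C^(n+1) * (s - a)^n / ↑n.factorial))
            = fun s : ℝ => -((M * C^(n+1) / ↑n.factorial) * (s - a)^n) := by
          funext s; ring
        rw [e1, intervalIntegral.integral_neg, intervalIntegral.integral_const_mul,
          intervalIntegral.integral_comp_sub_right (fun x => x^n) a, sub_self,
          integral_pow]
        have hfact : ((n+1).factorial : ℝ) = (n+1) * n.factorial := by
          rw [Nat.factorial_succ]; push_cast; ring
        have hne1 : ((n:ℝ)+1) ≠ 0 := by positivity
        have hne2 : ((n.factorial:ℝ)) ≠ 0 := Nat.cast_ne_zero.2 n.factorial_ne_zero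
        rw [hfact]
        rw [zero_pow (Nat.succ_ne_zero n), mul_pow]
        push_cast
        field_simp
        ring
      constructor
      · rw [hw t ht]
        exact step c₁ m hc₁ hcw (fun s hs => (ih s hs).2)
      · exact le_trans (step c₂ w hc₂ hcm (fun s hs => (ih s hs).1)) (hm t ht)
  intro t ht
  have htd : Tendsto (fun n : ℕ => -(M * ((C * (t - a))^n / n.factorial))) atTop (nhds 0) := by
    have := (FloorSemiring.tendsto_pow_div_factorial_atTop (C * (t - a))).const_mul M
    simpa using this.neg
  exact le_of_tendsto htd (Eventually.of_forall fun n => (key n t ht).1)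

lemma lipschitzOnWith_of_hasDerivAt {f f' : ℝ → ℝ} {a b : ℝ}
    (hd : ∀ x ∈ Icc a b, HasDerivAt f (f' x) x) (hc : ContinuousOn f' (Icc a b)) :
    ∃ K : NNReal, LipschitzOnWith K f (Icc a b) := by
  obtain ⟨B, hB⟩ := isCompact_Icc.exists_bound_of_continuousOn hc
  refine ⟨Real.toNNReal B, (convex_Icc a b).lipschitzOnWith_of_nnnorm_hasDerivWithin_le
    (fun x hx => (hd x hx).hasDerivWithinAt) ?_⟩
  intro x hx
  rw [← NNReal.coe_le_coe, coe_nnnorm, Real.coe_toNNReal']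
  exact le_max_of_le_left (hB x hx)

lemma lipschitzOnWith_add {f g : ℝ → ℝ} {s : Set ℝ} {Kf Kg : NNReal}
    (hf : LipschitzOnWith Kf f s) (hg : LipschitzOnWith Kg g s) :
    LipschitzOnWith (Kf + Kg) (fun x => f x + g x) s := by
  apply LipschitzOnWith.of_dist_le_mul
  intro x hx y hy
  have h1 := hf.dist_le_mul x hx y hy
  have h2 := hg.dist_le_mul x hx y hy
  rw [Real.dist_eq] at h1 h2 ⊢
  rw [Real.dist_eq] at h1 h2 ⊢
  push_cast
  calc |f x + g x - (f y + g y)| ≤ |f x - f y| + |g x - g y| := by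
        have : f x + g x - (f y + g y) = (f x - f y) + (g x - g y) := by ring
        rw [this]; exact abs_add_le _ _
    _ ≤ Kf * |x - y| + Kg * |x - y| := add_le_add h1 h2
    _ = (Kf + Kg) * |x - y| := by ring

noncomputable def Hh (h : ℝ → ℝ) (t : ℝ) : ℝ := ∫ s in (1/2:ℝ)..t, h s / (s * (1 - s))
noncomputable def Phi (P A0 t : ℝ) : ℝ :=
  4*P*(t^2/2 - t^3/3 - 1/12) - 8*P*A0/3*(2*t^3 - 3*t^2 + 3*t - 1)
noncomputable def PhiD (P A0 t : ℝ) : ℝ := 4*P*(t - t^2) - 8*P*A0*(2*t^2 - 2*t + 1)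
noncomputable def PhiDD (P A0 t : ℝ) : ℝ := 4*P*(1 - 2*t) - 8*P*A0*(4*t - 2)

lemma hasDerivAt_Phi (P A0 t : ℝ) : HasDerivAt (Phi P A0) (PhiD P A0 t) t := by
  have A2 : HasDerivAt (fun t : ℝ => t^2) (2*t) t := by simpa using hasDerivAt_pow 2 t
  have A3 : HasDerivAt (fun t : ℝ => t^3) (3*t^2) t := by simpa using hasDerivAt_pow 3 t
  have A1 : HasDerivAt (fun t : ℝ => t) 1 t := hasDerivAt_id t
  have B1 := (((A2.div_const 2).sub (A3.div_const 3)).sub_const (1/12)).const_mul (4*P)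
  have B2 := ((((A3.const_mul 2).sub (A2.const_mul 3)).add (A1.const_mul 3)).sub_const 1).const_mul
    (8*P*A0/3)
  have := B1.sub B2
  exact this.congr_deriv (by unfold PhiD; ring)

lemma hasDerivAt_PhiD (P A0 t : ℝ) : HasDerivAt (PhiD P A0) (PhiDD P A0 t) t := by
  have A2 : HasDerivAt (fun t : ℝ => t^2) (2*t) t := by simpa using hasDerivAt_pow 2 t
  have A1 : HasDerivAt (fun t : ℝ => t) 1 t := hasDerivAt_id t
  have B1 := ((A1.sub A2)).const_mul (4*P)
  have B2 := (((A2.const_mul 2).sub (A1.const_mul 2)).add_const 1).const_mul (8*P*A0)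
  have := B1.sub B2
  exact this.congr_deriv (by unfold PhiDD; ring)

lemma Phi_half (P A0 : ℝ) : Phi P A0 (1/2) = 0 := by unfold Phi; norm_num

noncomputable def Wf (h : ℝ → ℝ) (P A0 t : ℝ) : ℝ := Hh h t - Phi P A0 t
noncomputable def Mf (h : ℝ → ℝ) (P A0 t : ℝ) : ℝ :=
  h t / (t^3*(1-t)^3) - PhiD P A0 t / (t^2*(1-t)^2)


lemma continuous_PhiD (P A0 : ℝ) : Continuous (PhiD P A0) := by unfold PhiD; fun_prop
lemma continuous_PhiDD (P A0 : ℝ) : Continuous (PhiDD P A0) := by unfold PhiDD; fun_prop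

/-- derivative of `s ↦ s^3 (1-s)^3`. -/
lemma hasDerivAt_cube (s : ℝ) :
    HasDerivAt (fun x : ℝ => x^3*(1-x)^3) (3*s^2*(1-s)^3 + s^3*(3*(1-s)^2*(-1))) s := by
  have h1 : HasDerivAt (fun x : ℝ => (1-x)^3) (3*(1-s)^2*(-1)) s := by
    have inner : HasDerivAt (fun x : ℝ => 1 - x) (-1) s := (hasDerivAt_id s).const_sub 1
    have outer := hasDerivAt_pow 3 (1-s)
    have := outer.comp s inner
    exact this.congr_deriv (by push_cast; ring)
  have h2 := (hasDerivAt_pow 3 s).mul h1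
  exact h2.congr_deriv (by push_cast; ring)

lemma hasDerivAt_sq (s : ℝ) :
    HasDerivAt (fun x : ℝ => x^2*(1-x)^2) (2*s*(1-s)^2 + s^2*(2*(1-s)*(-1))) s := by
  have h1 : HasDerivAt (fun x : ℝ => (1-x)^2) (2*(1-s)*(-1)) s := by
    have inner : HasDerivAt (fun x : ℝ => 1 - x) (-1) s := (hasDerivAt_id s).const_sub 1
    have outer := hasDerivAt_pow 2 (1-s)
    have := outer.comp s inner
    exact this.congr_deriv (by push_cast; ring)
  have h2 := (hasDerivAt_pow 2 s).mul h1
  exact h2.congr_deriv (by push_cast; ring)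

lemma hasDerivAt_Mf {h : ℝ → ℝ} {P A0 s dh : ℝ} (hh : HasDerivAt h dh s)
    (h0 : 0 < s) (h1 : s < 1) :
    HasDerivAt (Mf h P A0)
      ((dh * (s^3*(1-s)^3) - h s * (3*s^2*(1-s)^3 + s^3*(3*(1-s)^2*(-1)))) / (s^3*(1-s)^3)^2
        - (PhiDD P A0 s * (s^2*(1-s)^2) - PhiD P A0 s * (2*s*(1-s)^2 + s^2*(2*(1-s)*(-1))))
          / (s^2*(1-s)^2)^2) s := by
  have hA : (0:ℝ) < 1 - s := by linarith
  have hd3 : s^3*(1-s)^3 ≠ 0 := (mul_pos (pow_pos h0 3) (pow_pos hA 3)).ne'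
  have hd2 : s^2*(1-s)^2 ≠ 0 := (mul_pos (pow_pos h0 2) (pow_pos hA 2)).ne'
  exact (hh.div (hasDerivAt_cube s) hd3).sub
    ((hasDerivAt_PhiD P A0 s).div (hasDerivAt_sq s) hd2)

theorem stmt0 (h : ℝ → ℝ)
    (hlip : ∀ a b : ℝ, 1/2 ≤ a → b < 1 → ∃ L : NNReal, LipschitzOnWith L h (Icc a b))
    (hderiv : ∀ᵐ t ∂volume, t ∈ Ioo (1/2 : ℝ) 1 →
      deriv h t ≥ -4 * Real.pi * (t - 1/2) - (3 * (2*t - 1) / (t * (1 - t))) * h t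
        + 6 * ∫ s in (1/2 : ℝ)..t, h s / (s * (1 - s))) :
    ∀ t ∈ Ioo (1/2 : ℝ) 1,
      (1/2) * t^2 - (1/3) * t^3 - 1/12
          - (1 / (4 * Real.pi)) * ∫ s in (1/2 : ℝ)..t, h s / (s * (1 - s))
        ≤ (2 * (1/4 - h (1/2) / Real.pi) / 3) * (3*t^2 - 3*t + 1)
          - (4 * (1/4 - h (1/2) / Real.pi) / 3) * (1 - t)^3 := by
  intro t₀ ht₀
  obtain ⟨ht01, ht02⟩ := ht₀
  have hP : (0:ℝ) < Real.pi := Real.pi_pos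
  set P : ℝ := Real.pi with hPdef
  set A0 : ℝ := 1/4 - h (1/2) / P with hA0
  set b : ℝ := (t₀ + 1)/2 with hb
  have hb1 : b < 1 := by rw [hb]; linarith
  have hab : (1/2:ℝ) < b := by rw [hb]; linarith
  have ht0b : t₀ < b := by rw [hb]; linarith
  obtain ⟨L, hL⟩ := hlip (1/2) b le_rfl hb1
  have hconth : ContinuousOn h (Icc (1/2) b) := hL.continuousOn
  have hsf : ∀ s ∈ Icc (1/2:ℝ) b, 0 < s ∧ s < 1 := fun s hs =>
    ⟨lt_of_lt_of_le (by norm_num) hs.1, lt_of_le_of_lt hs.2 hb1⟩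
  -- continuity of the primitive
  have hg0cont : ContinuousOn (fun s => h s / (s * (1 - s))) (Icc (1/2) b) := by
    apply hconth.div (by fun_prop)
    intro s hs
    have := hsf s hs
    have : (0:ℝ) < s * (1 - s) := by nlinarith [this.1, this.2]
    exact ne_of_gt this
  have hHcont : ContinuousOn (Hh h) (Icc (1/2) b) := by
    have hint : IntegrableOn (fun s => h s / (s * (1 - s))) (uIcc (1/2) b) volume := by
      rw [uIcc_of_le hab.le]
      exact hg0cont.integrableOn_Icc
    have := intervalIntegral.continuousOn_primitive_interval hint
    rw [uIcc_of_le hab.le] at this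
    exact this
  have hWcont : ContinuousOn (Wf h P A0) (Icc (1/2) b) := by
    have : ContinuousOn (fun t => Hh h t - Phi P A0 t) (Icc (1/2) b) := by
      apply hHcont.sub
      apply Continuous.continuousOn
      unfold Phi; fun_prop
    exact this
  -- Lipschitz property of Mf
  have hMlip : ∃ K : NNReal, LipschitzOnWith K (Mf h P A0) (Icc (1/2) b) := by
    set q : ℝ → ℝ := fun s => (s^3*(1-s)^3)⁻¹ with hq
    set qd : ℝ → ℝ := fun s => -(3*s^2*(1-s)^3 + s^3*(3*(1-s)^2*(-1))) / (s^3*(1-s)^3)^2 with hqd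
    set r : ℝ → ℝ := fun s => -(PhiD P A0 s / (s^2*(1-s)^2)) with hr
    set rd : ℝ → ℝ := fun s =>
      -((PhiDD P A0 s * (s^2*(1-s)^2) - PhiD P A0 s * (2*s*(1-s)^2 + s^2*(2*(1-s)*(-1))))
        / (s^2*(1-s)^2)^2) with hrd
    have hden : ∀ s ∈ Icc (1/2:ℝ) b, s^3*(1-s)^3 ≠ 0 ∧ s^2*(1-s)^2 ≠ 0 := by
      intro s hs
      obtain ⟨h0, h1⟩ := hsf s hs
      have hA : (0:ℝ) < 1 - s := by linarith
      exact ⟨(mul_pos (pow_pos h0 3) (pow_pos hA 3)).ne',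
        (mul_pos (pow_pos h0 2) (pow_pos hA 2)).ne'⟩
    have hqder : ∀ s ∈ Icc (1/2:ℝ) b, HasDerivAt q (qd s) s := by
      intro s hs
      have := (hasDerivAt_cube s).inv (hden s hs).1
      exact this.congr_deriv (by simp only [hqd])
    have hrder : ∀ s ∈ Icc (1/2:ℝ) b, HasDerivAt r (rd s) s := by
      intro s hs
      exact ((hasDerivAt_PhiD P A0 s).div (hasDerivAt_sq s) (hden s hs).2).neg
    have hqdcont : ContinuousOn qd (Icc (1/2) b) := by
      apply ContinuousOn.div (by fun_prop) (by fun_prop)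
      intro s hs
      exact pow_ne_zero 2 (hden s hs).1
    have hrdcont : ContinuousOn rd (Icc (1/2) b) := by
      apply ContinuousOn.neg
      apply ContinuousOn.div
      · exact ((continuous_PhiDD P A0).continuousOn.mul (by fun_prop)).sub
          ((continuous_PhiD P A0).continuousOn.mul (by fun_prop))
      · fun_prop
      · intro s hs
        exact pow_ne_zero 2 (hden s hs).2
    obtain ⟨Kq, hKq⟩ := lipschitzOnWith_of_hasDerivAt hqder hqdcont
    obtain ⟨Kr, hKr⟩ := lipschitzOnWith_of_hasDerivAt hrder hrdcont
    have hqcont : ContinuousOn q (Icc (1/2) b) := hKq.continuousOn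
    obtain ⟨Bh, hBh⟩ := isCompact_Icc.exists_bound_of_continuousOn hconth
    obtain ⟨Bq, hBq⟩ := isCompact_Icc.exists_bound_of_continuousOn hqcont
    obtain ⟨K1, hK1⟩ := lipschitzOnWith_mul hL hKq hBh hBq
    have := lipschitzOnWith_add hK1 hKr
    refine ⟨K1 + Kr, ?_⟩
    have hfun : (fun x => h x * q x + r x) = Mf h P A0 := by
      funext s
      rw [hq, hr]
      unfold Mf
      rw [div_eq_mul_inv]
      ring
    rwa [hfun] at this
  obtain ⟨KM, hKM⟩ := hMlip
  have hMcont : ContinuousOn (Mf h P A0) (Icc (1/2) b) := hKM.continuousOn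
  -- Mf at 1/2 vanishes
  have hMhalf : Mf h P A0 (1/2) = 0 := by
    unfold Mf PhiD
    rw [hA0]
    have hPne : P ≠ 0 := ne_of_gt hP
    field_simp
    ring
  -- the integral identity for Wf
  have hWeq : ∀ t ∈ Icc (1/2:ℝ) b, Wf h P A0 t
      = ∫ s in (1/2:ℝ)..t, (s^2*(1-s)^2) * Mf h P A0 s := by
    intro t ht
    have hIcc : Icc (1/2:ℝ) t ⊆ Icc (1/2:ℝ) b := Icc_subset_Icc le_rfl ht.2
    have hPhiInt : Phi P A0 t = ∫ s in (1/2:ℝ)..t, PhiD P A0 s := by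
      rw [intervalIntegral.integral_eq_sub_of_hasDerivAt
        (fun x _ => hasDerivAt_Phi P A0 x) ((continuous_PhiD P A0).intervalIntegrable _ _)]
      rw [Phi_half]; ring
    have hg0int : IntervalIntegrable (fun s => h s / (s * (1 - s))) volume (1/2) t := by
      apply ContinuousOn.intervalIntegrable
      rw [uIcc_of_le ht.1]
      exact hg0cont.mono hIcc
    have hsub : Wf h P A0 t
        = ∫ s in (1/2:ℝ)..t, (h s / (s * (1 - s)) - PhiD P A0 s) := by
      rw [intervalIntegral.integral_sub hg0int ((continuous_PhiD P A0).intervalIntegrable _ _)]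
      unfold Wf Hh
      rw [hPhiInt]
    rw [hsub]
    apply intervalIntegral.integral_congr
    intro s hs
    rw [uIcc_of_le ht.1] at hs
    obtain ⟨h0, h1⟩ := hsf s (hIcc hs)
    have hs0 : s ≠ 0 := ne_of_gt h0
    have hs1 : (1:ℝ) - s ≠ 0 := by intro hc; nlinarith
    unfold Mf
    field_simp
  -- a.e. derivative lower bound for Mf
  obtain ⟨F, hF, hFeq⟩ := hL.extend_real
  have hMder : ∀ᵐ s ∂(volume : Measure ℝ), s ∈ Ioo (1/2:ℝ) b →
      6/(s^3*(1-s)^3) * Wf h P A0 s ≤ deriv (Mf h P A0) s := by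
    filter_upwards [hF.ae_differentiableAt (μ := volume), hderiv] with s hdF hineq hs
    have hsf' := hsf s (Ioo_subset_Icc_self hs)
    obtain ⟨h0, h1⟩ := hsf'
    have hmem : Icc (1/2:ℝ) b ∈ nhds s := Icc_mem_nhds hs.1 hs.2
    have heq : h =ᶠ[nhds s] F := eventually_of_mem hmem (fun y hy => hFeq hy)
    have hdh : DifferentiableAt ℝ h s := heq.differentiableAt_iff.2 hdF
    have hHd : HasDerivAt h (deriv h s) s := hdh.hasDerivAt
    have hMd := hasDerivAt_Mf (P := P) (A0 := A0) hHd h0 h1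
    rw [hMd.deriv]
    have hE := hineq ⟨hs.1, lt_trans hs.2 hb1⟩
    have hHs : (∫ x in (1/2:ℝ)..s, h x / (x * (1 - x))) = Hh h s := rfl
    rw [hHs] at hE
    have hs0 : s ≠ 0 := ne_of_gt h0
    have hs1 : (1:ℝ) - s ≠ 0 := by intro hc; nlinarith
    have key : ((deriv h s * (s^3*(1-s)^3)
          - h s * (3*s^2*(1-s)^3 + s^3*(3*(1-s)^2*(-1)))) / (s^3*(1-s)^3)^2
        - (PhiDD P A0 s * (s^2*(1-s)^2)
          - PhiD P A0 s * (2*s*(1-s)^2 + s^2*(2*(1-s)*(-1)))) / (s^2*(1-s)^2)^2)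
        - 6/(s^3*(1-s)^3) * Wf h P A0 s
        = (deriv h s - (-4 * P * (s - 1/2) - (3 * (2*s - 1) / (s * (1 - s))) * h s
            + 6 * Hh h s)) / (s^3*(1-s)^3) := by
      unfold Wf Phi PhiD PhiDD
      field_simp
      ring
    have hpos : (0:ℝ) < s^3*(1-s)^3 := mul_pos (pow_pos h0 3) (pow_pos (by linarith) 3)
    have hnum : 0 ≤ deriv h s - (-4 * P * (s - 1/2) - (3 * (2*s - 1) / (s * (1 - s))) * h s
        + 6 * Hh h s) := by linarith [hE]
    have := div_nonneg hnum hpos.le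
    linarith [key, this]
  -- integral inequality for Mf
  have hMint : ∀ t ∈ Icc (1/2:ℝ) b,
      (∫ s in (1/2:ℝ)..t, 6/(s^3*(1-s)^3) * Wf h P A0 s) ≤ Mf h P A0 t := by
    intro t ht
    have hIcc : Icc (1/2:ℝ) t ⊆ Icc (1/2:ℝ) b := Icc_subset_Icc le_rfl ht.2
    have hc2cont : ContinuousOn (fun s => 6/(s^3*(1-s)^3) * Wf h P A0 s) (Icc (1/2) b) := by
      apply ContinuousOn.mul _ hWcont
      apply ContinuousOn.div (by fun_prop) (by fun_prop)
      intro s hs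
      obtain ⟨h0, h1⟩ := hsf s hs
      exact (mul_pos (pow_pos h0 3) (pow_pos (by linarith : (0:ℝ) < 1-s) 3)).ne'
    have := integral_le_of_lip ht.1 (hKM.mono hIcc) (hc2cont.mono hIcc) ?_
    · rw [hMhalf] at this; linarith
    · filter_upwards [hMder] with s hsp hsI
      exact hsp ⟨hsI.1, lt_of_lt_of_le hsI.2 ht.2⟩
  -- bounds
  obtain ⟨M1, hM1⟩ := isCompact_Icc.exists_bound_of_continuousOn hWcont
  obtain ⟨M2, hM2⟩ := isCompact_Icc.exists_bound_of_continuousOn hMcont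
  have hhalfmem : (1/2:ℝ) ∈ Icc (1/2:ℝ) b := ⟨le_rfl, hab.le⟩
  set M : ℝ := max M1 M2 with hM
  have hMnn : 0 ≤ M := le_trans (norm_nonneg (Wf h P A0 (1/2)))
    ((hM1 _ hhalfmem).trans (le_max_left _ _))
  set C : ℝ := max 1 (48/(1-b)^3) with hC
  have hCnn : (0:ℝ) ≤ C := le_trans zero_le_one (le_max_left _ _)
  have hc1bd : ∀ s ∈ Icc (1/2:ℝ) b, 0 ≤ s^2*(1-s)^2 ∧ s^2*(1-s)^2 ≤ C := by
    intro s hs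
    obtain ⟨h0, h1⟩ := hsf s hs
    have hA : (0:ℝ) < 1 - s := by linarith
    constructor
    · positivity
    · apply le_trans _ (le_max_left 1 _)
      have e1 : s^2 ≤ 1 := by nlinarith
      have e2 : (1-s)^2 ≤ 1 := by nlinarith
      have := mul_le_mul e1 e2 (sq_nonneg (1-s)) zero_le_one
      linarith
  have hc2bd : ∀ s ∈ Icc (1/2:ℝ) b, 0 ≤ 6/(s^3*(1-s)^3) ∧ 6/(s^3*(1-s)^3) ≤ C := by
    intro s hs
    obtain ⟨h0, h1⟩ := hsf s hs
    have hA : (0:ℝ) < 1 - s := by linarith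
    have hp : (0:ℝ) < s^3*(1-s)^3 := mul_pos (pow_pos h0 3) (pow_pos hA 3)
    constructor
    · positivity
    · apply le_trans _ (le_max_right 1 _)
      rw [div_le_div_iff₀ hp (pow_pos (by linarith : (0:ℝ) < 1-b) 3)]
      have e1 : (1-b:ℝ) ≤ 1-s := by linarith [hs.2]
      have e2 : (0:ℝ) ≤ 1-b := by linarith
      have e3 : (1-b:ℝ)^3 ≤ (1-s)^3 := pow_le_pow_left₀ e2 e1 3
      have e4 : (1/2:ℝ)^3 ≤ s^3 := pow_le_pow_left₀ (by norm_num) hs.1 3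
      have e5 : (1/2:ℝ)^3*(1-s)^3 ≤ s^3*(1-s)^3 :=
        mul_le_mul_of_nonneg_right e4 (pow_nonneg hA.le 3)
      nlinarith [e3, e5]
  have hcwcont : ContinuousOn (fun s => s^2*(1-s)^2 * Mf h P A0 s) (Icc (1/2) b) :=
    (by fun_prop : Continuous fun s : ℝ => s^2*(1-s)^2).continuousOn.mul hMcont
  have hcmcont : ContinuousOn (fun s => 6/(s^3*(1-s)^3) * Wf h P A0 s) (Icc (1/2) b) := by
    apply ContinuousOn.mul _ hWcont
    apply ContinuousOn.div (by fun_prop) (by fun_prop)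
    intro s hs
    obtain ⟨h0, h1⟩ := hsf s hs
    exact (mul_pos (pow_pos h0 3) (pow_pos (by linarith : (0:ℝ) < 1-s) 3)).ne'
  have hWpos := gronwall_pos hab.le hCnn hMnn hc1bd hc2bd hcwcont hcmcont hWeq hMint
    (fun s hs => by rw [← Real.norm_eq_abs]; exact (hM1 s hs).trans (le_max_left _ _))
    (fun s hs => by rw [← Real.norm_eq_abs]; exact (hM2 s hs).trans (le_max_right _ _))
    t₀ ⟨ht01.le, ht0b.le⟩
  -- final algebra
  have hHt : (∫ s in (1/2:ℝ)..t₀, h s / (s * (1 - s))) = Hh h t₀ := rfl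
  rw [hHt]
  have hPne : P ≠ 0 := ne_of_gt hP
  have key : ((2 * A0 / 3) * (3*t₀^2 - 3*t₀ + 1)
      - (4 * A0 / 3) * (1 - t₀)^3)
      - ((1/2) * t₀^2 - (1/3) * t₀^3 - 1/12 - (1 / (4 * P)) * Hh h t₀)
      = Wf h P A0 t₀ / (4 * P) := by
    unfold Wf Phi
    field_simp
    ring
  have hdiv : 0 ≤ Wf h P A0 t₀ / (4 * P) := div_nonneg hWpos (by linarith)
  linarith [key, hdiv]
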